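/- Consider a random walk on an infinite, locally finite, connected weighted graph with positive conductances. If the effective resistance from a vertex o to infinity is finite, then the walk started at o is transient. -/

import Mathlib

/-- The return probability to `o` of the random walk with transition kernel `q`
on a countable state space: the sum over all paths starting and ending at `o`
whose interior avoids `o` of the product of transition probabilities. -/
noncomputable def returnProb {V : Type*} [Countable V] [DecidableEq V]
    (q : V → V → ℝ) (o : V) : ℝ :=
  ∑' n : ℕ, ∑' v : Fin (n + 2) → V,
    (if v 0 = o ∧ v (Fin.last (n + 1)) = o ∧
        (∀ i : Fin (n + 2), i ≠ 0 → i ≠ Fin.last (n + 1) → v i ≠ o)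
      then ∏ i : Fin (n + 1), q (v i.castSucc) (v i.succ) else 0)

section auxsec

variable {V : Type*} [DecidableEq V]

/-- Truncated hitting-path sums: `uauxQ q o A n x` is the total weight of paths of
length `n+1` from `x` to `o` whose intermediate vertices lie in `A.erase o`. -/
noncomputable def uauxQ (q : V → V → ℝ) (o : V) (A : Finset V) : ℕ → V → ℝ
  | 0, x => q x o
  | n+1, x => ∑ y ∈ A.erase o, q x y * uauxQ q o A n y

variable (q : V → V → ℝ) (o : V) (A : Finset V)

lemma uauxQ_nonneg (hq : ∀ x y, 0 ≤ q x y) : ∀ n x, 0 ≤ uauxQ q o A n x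
  | 0, x => hq x o
  | n+1, x => Finset.sum_nonneg fun y _ => mul_nonneg (hq x y) (uauxQ_nonneg hq n y)

lemma sum_range_uauxQ_le_one (hq : ∀ x y, 0 ≤ q x y)
    (hq1 : ∀ (x : V) (s : Finset V), ∑ y ∈ s, q x y ≤ 1) :
    ∀ (N : ℕ) (x : V), ∑ n ∈ Finset.range N, uauxQ q o A n x ≤ 1 := by
  intro N
  induction N with
  | zero => intro x; simp
  | succ N ih =>
    intro x
    rw [Finset.sum_range_succ']
    have h1 : ∑ n ∈ Finset.range N, uauxQ q o A (n+1) x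
        = ∑ y ∈ A.erase o, q x y * ∑ n ∈ Finset.range N, uauxQ q o A n y := by
      simp only [uauxQ]
      rw [Finset.sum_comm]
      exact Finset.sum_congr rfl fun y _ => (Finset.mul_sum _ _ _).symm
    have h2 : ∑ y ∈ A.erase o, q x y * ∑ n ∈ Finset.range N, uauxQ q o A n y
        ≤ ∑ y ∈ A.erase o, q x y :=
      Finset.sum_le_sum fun y _ => mul_le_of_le_one_right (hq x y) (ih y)
    have h3 : q x o + ∑ y ∈ A.erase o, q x y ≤ 1 := by
      have := hq1 x (insert o (A.erase o))
      rwa [Finset.sum_insert (Finset.notMem_erase o A)] at this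
    have h4 : uauxQ q o A 0 x = q x o := rfl
    rw [h1, h4]
    linarith

lemma uauxQ_summable (hq : ∀ x y, 0 ≤ q x y)
    (hq1 : ∀ (x : V) (s : Finset V), ∑ y ∈ s, q x y ≤ 1) (x : V) :
    Summable (fun n => uauxQ q o A n x) :=
  summable_of_sum_range_le (fun n => uauxQ_nonneg q o A hq n x)
    (fun N => sum_range_uauxQ_le_one q o A hq hq1 N x)

lemma uauxQ_tsum_rec (hq : ∀ x y, 0 ≤ q x y)
    (hq1 : ∀ (x : V) (s : Finset V), ∑ y ∈ s, q x y ≤ 1) (x : V) :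
    ∑' n, uauxQ q o A n x
      = q x o + ∑ y ∈ A.erase o, q x y * ∑' n, uauxQ q o A n y := by
  rw [Summable.tsum_eq_zero_add (uauxQ_summable q o A hq hq1 x)]
  congr 1
  have h1 : ∀ n : ℕ, uauxQ q o A (n+1) x = ∑ y ∈ A.erase o, q x y * uauxQ q o A n y :=
    fun n => rfl
  calc ∑' n, uauxQ q o A (n+1) x
      = ∑' n, ∑ y ∈ A.erase o, q x y * uauxQ q o A n y := by
        exact tsum_congr h1
    _ = ∑ y ∈ A.erase o, ∑' n, q x y * uauxQ q o A n y := by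
        exact Summable.tsum_finsetSum fun y _ => (uauxQ_summable q o A hq hq1 y).mul_left _
    _ = ∑ y ∈ A.erase o, q x y * ∑' n, uauxQ q o A n y := by
        exact Finset.sum_congr rfl fun y _ => tsum_mul_left

lemma uauxQ_ge_pathsum (hq : ∀ x y, 0 ≤ q x y) :
    ∀ (n : ℕ) (x : V) (S : Finset (Fin (n + 2) → V)),
      (∀ v ∈ S, v 0 = x ∧ v (Fin.last (n + 1)) = o ∧
        ∀ i : Fin (n + 2), i ≠ 0 → i ≠ Fin.last (n + 1) → v i ∈ A.erase o) →
      ∑ v ∈ S, (∏ i : Fin (n + 1), q (v i.castSucc) (v i.succ)) ≤ uauxQ q o A n x := by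
  intro n
  induction n with
  | zero =>
    intro x S hS
    have hsub : S ⊆ {fun i : Fin 2 => if i = 0 then x else o} := by
      intro v hv
      rw [Finset.mem_singleton]
      funext i
      fin_cases i
      · simpa using (hS v hv).1
      · simpa using (hS v hv).2.1
    calc ∑ v ∈ S, (∏ i : Fin 1, q (v i.castSucc) (v i.succ))
        ≤ ∑ v ∈ ({fun i : Fin 2 => if i = 0 then x else o} : Finset (Fin 2 → V)),
            (∏ i : Fin 1, q (v i.castSucc) (v i.succ)) := by
          apply Finset.sum_le_sum_of_subset_of_nonneg hsub
          intro v _ _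
          exact Finset.prod_nonneg fun i _ => hq _ _
      _ = uauxQ q o A 0 x := by
          rw [Finset.sum_singleton, Fin.prod_univ_one]
          simp [uauxQ]
  | succ n ih =>
    intro x S hS
    have h10 : (1 : Fin (n+3)) ≠ 0 := by
      simp [Fin.ext_iff]
    have h1l : (1 : Fin (n+3)) ≠ Fin.last (n+2) := by
      simp [Fin.ext_iff]
    have hmap : ∀ v ∈ S, v 1 ∈ A.erase o := fun v hv => (hS v hv).2.2 1 h10 h1l
    rw [← Finset.sum_fiberwise_of_maps_to hmap
      (fun v => ∏ i : Fin (n + 2), q (v i.castSucc) (v i.succ))]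
    have hu : uauxQ q o A (n+1) x = ∑ y ∈ A.erase o, q x y * uauxQ q o A n y := rfl
    rw [hu]
    apply Finset.sum_le_sum
    intro y hy
    set T := Finset.filter (fun v => v 1 = y) S with hT
    have hTmem : ∀ v ∈ T, v ∈ S ∧ v 1 = y := fun v hv => Finset.mem_filter.mp hv
    have hsplit : ∀ v ∈ T, (∏ i : Fin (n + 2), q (v i.castSucc) (v i.succ))
        = q x y * ∏ i : Fin (n + 1), q ((v ∘ Fin.succ) i.castSucc) ((v ∘ Fin.succ) i.succ) := by
      intro v hv
      rw [Fin.prod_univ_succ]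
      congr 1
      · have h0 : v 0 = x := (hS v (hTmem v hv).1).1
        have h1 : v 1 = y := (hTmem v hv).2
        simp [h0, h1]
    rw [Finset.sum_congr rfl hsplit, ← Finset.mul_sum]
    have hinj : ∀ v ∈ T, ∀ w ∈ T, v ∘ Fin.succ = w ∘ Fin.succ → v = w := by
      intro v hv w hw h
      funext i
      induction i using Fin.cases with
      | zero => rw [(hS v (hTmem v hv).1).1, (hS w (hTmem w hw).1).1]
      | succ j => exact congrFun h j
    have himg : ∑ v ∈ T, ∏ i : Fin (n + 1), q ((v ∘ Fin.succ) i.castSucc) ((v ∘ Fin.succ) i.succ)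
        = ∑ t ∈ T.image (fun v => v ∘ Fin.succ), ∏ i : Fin (n + 1), q (t i.castSucc) (t i.succ) :=
      (Finset.sum_image (f := fun t => ∏ i : Fin (n + 1), q (t i.castSucc) (t i.succ)) hinj).symm
    rw [himg]
    apply mul_le_mul_of_nonneg_left _ (hq x y)
    apply ih y
    intro t ht
    obtain ⟨v, hv, rfl⟩ := Finset.mem_image.mp ht
    refine ⟨?_, ?_, ?_⟩
    · have := (hTmem v hv).2
      simpa [Fin.succ_zero_eq_one] using this
    · have := (hS v (hTmem v hv).1).2.1
      simpa [Fin.succ_last] using this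
    · intro i hi0 hil
      apply (hS v (hTmem v hv).1).2.2 i.succ (Fin.succ_ne_zero i)
      intro h
      apply hil
      have : i.succ = (Fin.last (n+1)).succ := by rw [h, Fin.succ_last]
      exact Fin.succ_injective _ this


end auxsec

/-- For the random walk on an infinite, locally finite, connected
weighted graph with conductances `c`, if the effective resistance from `o` to
infinity is finite (equivalently, the effective conductance to infinity — the
infimum of the Dirichlet energy over finitely supported potentials equal to `1`
at `o` — is positive), then the walk started at `o` is transient:
`P_o[T_o⁺ = ∞] > 0`, i.e. the return probability is `< 1`. -/
theorem stmt7 {V : Type*} [Countable V] [DecidableEq V] [Infinite V]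
    (c : V → V → ℝ) (hsymm : ∀ x y, c x y = c y x) (hnonneg : ∀ x y, 0 ≤ c x y)
    (hlocfin : ∀ x, {y | 0 < c x y}.Finite)
    (hpos : ∀ x, 0 < ∑' y, c x y)
    (hconn : ∀ x y, Relation.ReflTransGen (fun u w => 0 < c u w) x y)
    (o : V)
    (hres : ∃ ε > 0, ∀ f : V → ℝ, f o = 1 → (Function.support f).Finite →
      ε ≤ (1/2) * ∑' x, ∑' y, c x y * (f x - f y)^2) :
    returnProb (fun x y => c x y / ∑' z, c x z) o < 1 := by
  obtain ⟨ε, hε, hres⟩ := hres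
  by_contra hcon
  rw [not_lt] at hcon
  set π : V → ℝ := fun x => ∑' z, c x z with hπdef
  have hπpos : ∀ x, 0 < π x := hpos
  set q : V → V → ℝ := fun x y => c x y / ∑' z, c x z with hqdef
  have hq0 : ∀ x y, 0 ≤ q x y := fun x y => div_nonneg (hnonneg x y) (hπpos x).le
  have hsumc : ∀ x, Summable (fun y => c x y) := by
    intro x
    apply summable_of_ne_finset_zero (s := (hlocfin x).toFinset)
    intro y hy
    have h1 : ¬ 0 < c x y := fun h => hy ((hlocfin x).mem_toFinset.mpr h)
    linarith [hnonneg x y]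
  have hsumq : ∀ x, Summable (fun y => q x y) := by
    intro x
    simp only [hqdef, div_eq_mul_inv]
    exact (hsumc x).mul_right _
  have hqtsum : ∀ x, ∑' y, q x y = 1 := by
    intro x
    simp only [hqdef, div_eq_mul_inv]
    rw [tsum_mul_right]
    exact mul_inv_cancel₀ (hπpos x).ne'
  have hq1 : ∀ (x : V) (s : Finset V), ∑ y ∈ s, q x y ≤ 1 := by
    intro x s
    rw [← hqtsum x]
    exact Summable.sum_le_tsum s (fun y _ => hq0 x y) (hsumq x)
  have hcπq : ∀ x y, c x y = π x * q x y := by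
    intro x y
    have h1 : q x y = c x y / π x := rfl
    rw [h1, mul_comm]
    exact (div_mul_cancel₀ _ (hπpos x).ne').symm
  -- ### Step 1 : extract a finite family of first-return paths of large total weight
  set δ : ℝ := ε / π o with hδdef
  have hδpos : 0 < δ := div_pos hε (hπpos o)
  simp only [returnProb] at hcon
  set a : ℕ → ℝ := fun n => ∑' v : Fin (n + 2) → V,
    (if v 0 = o ∧ v (Fin.last (n + 1)) = o ∧
        (∀ i : Fin (n + 2), i ≠ 0 → i ≠ Fin.last (n + 1) → v i ≠ o)
      then ∏ i : Fin (n + 1), q (v i.castSucc) (v i.succ) else 0) with hadef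
  have hconA : 1 ≤ ∑' n, a n := hcon
  have hanonneg : ∀ n, 0 ≤ a n := by
    intro n
    apply tsum_nonneg
    intro v
    split
    · exact Finset.prod_nonneg fun i _ => hq0 _ _
    · exact le_refl 0
  have hsuma : Summable a := by
    by_contra hs
    rw [tsum_eq_zero_of_not_summable hs] at hconA
    linarith
  obtain ⟨F, hF⟩ : ∃ F : Finset ℕ, ∑ n ∈ F, a n ∈ Set.Ioi (1 - δ/2) := by
    have hlt : 1 - δ/2 < ∑' n, a n := by linarith
    exact (hsuma.hasSum.eventually (Ioi_mem_nhds hlt)).exists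
  rw [Set.mem_Ioi] at hF
  set δ' : ℝ := δ / (2 * (F.card + 1)) with hδ'def
  have hδ'pos : 0 < δ' := div_pos hδpos (by have := Nat.cast_nonneg (α := ℝ) F.card; linarith)
  have hextract : ∀ n : ℕ, ∃ S : Finset (Fin (n + 2) → V),
      (∀ v ∈ S, v 0 = o ∧ v (Fin.last (n + 1)) = o ∧
        (∀ i : Fin (n + 2), i ≠ 0 → i ≠ Fin.last (n + 1) → v i ≠ o)) ∧
      a n - δ' ≤ ∑ v ∈ S, ∏ i : Fin (n + 1), q (v i.castSucc) (v i.succ) := by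
    intro n
    by_cases hg : Summable (fun v : Fin (n + 2) → V =>
      (if v 0 = o ∧ v (Fin.last (n + 1)) = o ∧
          (∀ i : Fin (n + 2), i ≠ 0 → i ≠ Fin.last (n + 1) → v i ≠ o)
        then ∏ i : Fin (n + 1), q (v i.castSucc) (v i.succ) else 0))
    · have hlt : a n - δ' < a n := by linarith
      obtain ⟨T, hT⟩ : ∃ T : Finset (Fin (n + 2) → V), a n - δ' <
          ∑ v ∈ T, (if v 0 = o ∧ v (Fin.last (n + 1)) = o ∧
            (∀ i : Fin (n + 2), i ≠ 0 → i ≠ Fin.last (n + 1) → v i ≠ o)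
          then ∏ i : Fin (n + 1), q (v i.castSucc) (v i.succ) else 0) :=
        (hg.hasSum.eventually (Ioi_mem_nhds hlt)).exists
      refine ⟨T.filter (fun v => v 0 = o ∧ v (Fin.last (n + 1)) = o ∧
        (∀ i : Fin (n + 2), i ≠ 0 → i ≠ Fin.last (n + 1) → v i ≠ o)), ?_, ?_⟩
      · intro v hv
        exact (Finset.mem_filter.mp hv).2
      · rw [Finset.sum_filter]
        exact hT.le
    · refine ⟨∅, by simp, ?_⟩
      have : a n = 0 := tsum_eq_zero_of_not_summable hg
      rw [this, Finset.sum_empty]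
      linarith
  choose S hS1 hS2 using hextract
  -- ### Step 2 : the finite vertex sets
  set A : Finset V := insert o (F.biUnion fun n => (S n).biUnion fun v => Finset.image v Finset.univ)
    with hAdef
  have hoA : o ∈ A := Finset.mem_insert_self o _
  have hrange : ∀ n ∈ F, ∀ v ∈ S n, ∀ i, v i ∈ A := by
    intro n hn v hv i
    apply Finset.mem_insert_of_mem
    exact Finset.mem_biUnion.mpr ⟨n, hn, Finset.mem_biUnion.mpr
      ⟨v, hv, Finset.mem_image.mpr ⟨i, Finset.mem_univ i, rfl⟩⟩⟩
  set B : Finset V := A ∪ A.biUnion (fun x => (hlocfin x).toFinset) with hBdef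
  have hAB : A ⊆ B := Finset.subset_union_left
  have hoB : o ∈ B := hAB hoA
  have hcB : ∀ x ∈ A, ∀ y, 0 < c x y → y ∈ B := by
    intro x hx y hcy
    exact Finset.mem_union_right _ (Finset.mem_biUnion.mpr
      ⟨x, hx, (hlocfin x).mem_toFinset.mpr hcy⟩)
  have hczero : ∀ x ∈ A, ∀ y, y ∉ B → c x y = 0 := by
    intro x hx y hy
    by_contra h
    exact hy (hcB x hx y (lt_of_le_of_ne (hnonneg x y) (Ne.symm h)))
  have hπB : ∀ x ∈ A, π x = ∑ y ∈ B, c x y := by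
    intro x hx
    exact tsum_eq_sum (fun y hy => hczero x hx y hy)
  -- ### Step 3 : the truncated hitting function
  set hh : V → ℝ := fun x => ∑' n, uauxQ q o A n x with hhdef
  have hhnonneg : ∀ x, 0 ≤ hh x := fun x =>
    tsum_nonneg (fun n => uauxQ_nonneg q o A hq0 n x)
  have hhrec : ∀ x, hh x = q x o + ∑ y ∈ A.erase o, q x y * hh y := fun x =>
    uauxQ_tsum_rec q o A hq0 hq1 x
  set f : V → ℝ := fun x => if x = o then 1 else if x ∈ A then hh x else 0 with hfdef
  have hfo : f o = 1 := by simp [hfdef]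
  have hfA : ∀ x, x ∉ A → f x = 0 := by
    intro x hx
    have hxo : x ≠ o := fun h => hx (h ▸ hoA)
    simp [hfdef, hxo, hx]
  have hfnonneg : ∀ x, 0 ≤ f x := by
    intro x
    simp only [hfdef]
    split
    · norm_num
    · split
      · exact hhnonneg x
      · exact le_refl 0
  have hfh : ∀ x, x ∈ A → x ≠ o → f x = hh x := by
    intro x hx hxo
    simp [hfdef, hxo, hx]
  have hfsupp : (Function.support f).Finite := by
    apply Set.Finite.subset A.finite_toSet
    intro x hx
    by_contra h
    exact hx (hfA x h)
  -- ### Step 4 : lower bound on r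
  set r : ℝ := ∑ y ∈ B, q o y * f y with hrdef
  have hchain : 1 - δ < r := by
    have hkey : ∀ n ∈ F, ∑ v ∈ S n, (∏ i : Fin (n + 1), q (v i.castSucc) (v i.succ))
        ≤ uauxQ q o A n o := by
      intro n hn
      apply uauxQ_ge_pathsum q o A hq0 n o (S n)
      intro v hv
      refine ⟨(hS1 n v hv).1, (hS1 n v hv).2.1, ?_⟩
      intro i hi0 hil
      exact Finset.mem_erase.mpr ⟨(hS1 n v hv).2.2 i hi0 hil, hrange n hn v hv i⟩
    have hsum1 : ∑ n ∈ F, (a n - δ') ≤ ∑ n ∈ F, uauxQ q o A n o :=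
      Finset.sum_le_sum (fun n hn => le_trans (hS2 n) (hkey n hn))
    have hsum2 : ∑ n ∈ F, uauxQ q o A n o ≤ ∑' n, uauxQ q o A n o :=
      Summable.sum_le_tsum F (fun n _ => uauxQ_nonneg q o A hq0 n o) (uauxQ_summable q o A hq0 hq1 o)
    have hsum3 : ∑ n ∈ F, (a n - δ') = ∑ n ∈ F, a n - F.card * δ' := by
      rw [Finset.sum_sub_distrib, Finset.sum_const, nsmul_eq_mul]
    have hcard : (F.card : ℝ) * δ' ≤ δ / 2 := by
      have h0 : (0:ℝ) < 2 * ((F.card:ℝ) + 1) := by have := Nat.cast_nonneg (α := ℝ) F.card; linarith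
      rw [hδ'def]
      calc (F.card:ℝ) * (δ / (2 * ((F.card:ℝ) + 1)))
          = δ * ((F.card:ℝ) / (2 * ((F.card:ℝ)+1))) := by ring
        _ ≤ δ * (1/2) := by
            apply mul_le_mul_of_nonneg_left _ hδpos.le
            rw [div_le_div_iff₀ h0 two_pos]
            nlinarith [Nat.cast_nonneg (α := ℝ) F.card]
        _ = δ/2 := by ring
    have hr1 : ∑' n, uauxQ q o A n o = q o o + ∑ y ∈ A.erase o, q o y * hh y := by
      rw [uauxQ_tsum_rec q o A hq0 hq1 o]
    have hr2 : q o o + ∑ y ∈ A.erase o, q o y * hh y ≤ r := by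
      have hsub : ∑ y ∈ A, q o y * f y ≤ ∑ y ∈ B, q o y * f y :=
        Finset.sum_le_sum_of_subset_of_nonneg hAB
          (fun y _ _ => mul_nonneg (hq0 o y) (hfnonneg y))
      have heq : ∑ y ∈ A, q o y * f y = q o o + ∑ y ∈ A.erase o, q o y * hh y := by
        rw [← Finset.add_sum_erase _ _ hoA, hfo, mul_one]
        congr 1
        refine Finset.sum_congr rfl fun y hy => ?_
        obtain ⟨hyo, hyA⟩ := Finset.mem_erase.mp hy
        rw [hfh y hyA hyo]
      rw [hrdef, ← heq]
      exact hsub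
    linarith
  -- ### Step 5 : energy computation
  have hharm : ∀ x ∈ A, x ≠ o → ∑ y ∈ B, c x y * f y = π x * f x := by
    intro x hx hxo
    have h1 : ∑ y ∈ B, c x y * f y = ∑ y ∈ A, c x y * f y :=
      (Finset.sum_subset hAB (fun y _ hyA => by rw [hfA y hyA, mul_zero])).symm
    rw [h1, ← Finset.add_sum_erase _ _ hoA, hfo, mul_one]
    have h2 : ∀ y ∈ A.erase o, c x y * f y = π x * (q x y * hh y) := by
      intro y hy
      obtain ⟨hyo, hyA⟩ := Finset.mem_erase.mp hy
      rw [hfh y hyA hyo, hcπq x y]; ring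
    rw [Finset.sum_congr rfl h2, ← Finset.mul_sum]
    rw [hfh x hx hxo, hhrec x, hcπq x o]
    ring
  have hEin : ∀ x, (∑' y, c x y * (f x - f y)^2) = ∑ y ∈ B, c x y * (f x - f y)^2 := by
    intro x
    apply tsum_eq_sum
    intro y hy
    by_cases hxA : x ∈ A
    · rw [hczero x hxA y hy, zero_mul]
    · have h1 : f x = 0 := hfA x hxA
      have h2 : f y = 0 := hfA y (fun h => hy (hAB h))
      rw [h1, h2]; ring
  have hEout : ∑' x, ∑ y ∈ B, c x y * (f x - f y)^2
      = ∑ x ∈ B, ∑ y ∈ B, c x y * (f x - f y)^2 := by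
    apply tsum_eq_sum
    intro x hx
    apply Finset.sum_eq_zero
    intro y hy
    have hxA : x ∉ A := fun h => hx (hAB h)
    have hfx : f x = 0 := hfA x hxA
    by_cases hfy : f y = 0
    · rw [hfx, hfy]; ring
    · have hyA : y ∈ A := by
        by_contra h
        exact hfy (hfA y h)
      have hcyx : c y x = 0 := by
        by_contra h
        exact hx (hcB y hyA x (lt_of_le_of_ne (hnonneg y x) (Ne.symm h)))
      rw [hsymm x y, hcyx, zero_mul]
  set gg : V → ℝ := fun x => ∑ y ∈ B, c x y * (f x - f y) with hggdef
  have hparts : ∑ x ∈ B, ∑ y ∈ B, c x y * (f x - f y)^2 = 2 * ∑ x ∈ B, f x * gg x := by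
    have h1 : ∑ x ∈ B, ∑ y ∈ B, c x y * (f x - f y)^2
        = ∑ x ∈ B, ∑ y ∈ B, (f x * (c x y * (f x - f y)) - f y * (c x y * (f x - f y))) :=
      Finset.sum_congr rfl fun x _ => Finset.sum_congr rfl fun y _ => by ring
    have h2 : ∑ x ∈ B, ∑ y ∈ B, f y * (c x y * (f x - f y))
        = - ∑ x ∈ B, ∑ y ∈ B, f x * (c x y * (f x - f y)) := by
      rw [Finset.sum_comm]
      calc ∑ a ∈ B, ∑ b ∈ B, f a * (c b a * (f b - f a))
          = ∑ a ∈ B, ∑ b ∈ B, -(f a * (c a b * (f a - f b))) :=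
            Finset.sum_congr rfl fun a _ => Finset.sum_congr rfl fun b _ => by
              rw [hsymm b a]; ring
        _ = - ∑ a ∈ B, ∑ b ∈ B, f a * (c a b * (f a - f b)) := by
            simp [Finset.sum_neg_distrib]
    have h3 : ∀ x ∈ B, f x * gg x = ∑ y ∈ B, f x * (c x y * (f x - f y)) := by
      intro x _
      simp only [hggdef]
      rw [Finset.mul_sum]
    rw [h1]
    simp only [Finset.sum_sub_distrib]
    rw [h2, Finset.sum_congr rfl h3]
    ring
  have hggzero : ∀ x ∈ B, x ≠ o → f x * gg x = 0 := by
    intro x hxB hxo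
    by_cases hxA : x ∈ A
    · have hx1 : gg x = (∑ y ∈ B, c x y) * f x - ∑ y ∈ B, c x y * f y := by
        simp only [hggdef]
        have hexp : ∀ y ∈ B, c x y * (f x - f y) = c x y * f x - c x y * f y :=
          fun y _ => by ring
        rw [Finset.sum_congr rfl hexp, Finset.sum_sub_distrib, ← Finset.sum_mul]
      have : gg x = 0 := by
        rw [hx1, ← hπB x hxA, hharm x hxA hxo]; ring
      rw [this, mul_zero]
    · rw [hfA x hxA, zero_mul]
  have hsingle : ∑ x ∈ B, f x * gg x = gg o := by
    rw [Finset.sum_eq_single_of_mem o hoB hggzero, hfo, one_mul]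
  have hπr : π o * r = ∑ y ∈ B, c o y * f y := by
    rw [hrdef, Finset.mul_sum]
    exact Finset.sum_congr rfl fun y _ => by rw [hcπq o y]; ring
  have hgo : gg o = π o - π o * r := by
    simp only [hggdef]
    have hexp : ∀ y ∈ B, c o y * (f o - f y) = c o y - c o y * f y :=
      fun y _ => by rw [hfo]; ring
    rw [Finset.sum_congr rfl hexp, Finset.sum_sub_distrib, ← hπB o hoA, hπr]
  have hEsum : (1/2 : ℝ) * (∑' x, ∑' y, c x y * (f x - f y)^2) = π o - π o * r := by
    calc (1/2 : ℝ) * (∑' x, ∑' y, c x y * (f x - f y)^2)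
        = (1/2 : ℝ) * ∑ x ∈ B, ∑ y ∈ B, c x y * (f x - f y)^2 := by
          rw [tsum_congr hEin, hEout]
      _ = (1/2 : ℝ) * (2 * ∑ x ∈ B, f x * gg x) := by rw [hparts]
      _ = gg o := by rw [hsingle]; ring
      _ = π o - π o * r := hgo
  -- ### Step 6 : contradiction
  have hE := hres f hfo hfsupp
  rw [hEsum] at hE
  have h1 : π o * (1 - r) < π o * δ := by
    apply mul_lt_mul_of_pos_left _ (hπpos o)
    linarith
  have h2 : π o * δ = ε := by
    rw [hδdef, mul_comm]
    exact div_mul_cancel₀ _ (hπpos o).ne'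
  nlinarith
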